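/- The union of two distinct elementary s-t paths in a directed graph is never itself the arc set of an elementary s-t path. In other words, the shortest-path problem (over elementary s-t paths) is union-free. -/

import Mathlib

/-- An elementary s-t path given as a list of arcs. -/
def IsElemPath {V A : Type} (tail head : A → V) (s t : V) (p : List A) : Prop :=
  p ≠ [] ∧ p.Chain' (fun a b => head a = tail b) ∧
  (∀ a ∈ p.head?, tail a = s) ∧ (∀ a ∈ p.getLast?, head a = t) ∧
  (p.map tail ++ [t]).Nodup

theorem elem_path_sub_eq {V A : Type} (tail head : A → V) (t : V) :
    ∀ (p q : List A) (s : V), IsElemPath tail head s t q →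
      IsElemPath tail head s t p → (∀ a ∈ p, a ∈ q) → p = q := by
  intro p
  induction p with
  | nil => intro q s _ hp _; exact absurd rfl hp.1
  | cons a p' ih =>
    intro q s hq hp hsub
    obtain ⟨hqne, hqchain, hqhead, hqlast, hqnodup⟩ := hq
    obtain ⟨hpne, hpchain, hphead, hplast, hpnodup⟩ := hp
    obtain ⟨b, q', rfl⟩ := List.exists_cons_of_ne_nil hqne
    have hta : tail a = s := hphead a rfl
    have htb : tail b = s := hqhead b rfl
    have haq : a ∈ b :: q' := hsub a List.mem_cons_self
    have hqtails : (List.map tail (b :: q')).Nodup := (List.nodup_append.mp hqnodup).1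
    have hab : a = b := by
      rcases List.mem_cons.mp haq with h | h
      · exact h
      · exfalso
        have hm : tail a ∈ List.map tail q' := List.mem_map_of_mem h
        rw [List.map_cons] at hqtails
        exact (List.nodup_cons.mp hqtails).1 (by rwa [hta, ← htb] at hm)
    subst hab
    have htq : t ∉ List.map tail (a :: q') := by
      intro h
      exact (List.nodup_append'.mp hqnodup).2.2 h (List.mem_singleton_self t)
    cases p' with
    | nil =>
      have hat : head a = t := hplast a rfl
      cases q' with
      | nil => rfl
      | cons c q'' =>
        exfalso
        have hcc : head a = tail c := (List.isChain_cons_cons.mp hqchain).1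
        apply htq
        rw [← hat, hcc]
        exact List.mem_map_of_mem (List.mem_cons_of_mem a List.mem_cons_self)
    | cons c p'' =>
      have hpq' : ∀ x ∈ c :: p'', x ∈ q' := by
        intro x hx
        rcases List.mem_cons.mp (hsub x (List.mem_cons_of_mem a hx)) with h | h
        · exfalso
          subst h
          have hn : (List.map tail (x :: c :: p'')).Nodup := (List.nodup_append.mp hpnodup).1
          rw [List.map_cons] at hn
          exact (List.nodup_cons.mp hn).1 (List.mem_map_of_mem hx)
        · exact h
      have hq'ne : q' ≠ [] := by
        intro h
        subst h
        exact absurd (hpq' c List.mem_cons_self) List.not_mem_nil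
      obtain ⟨d, q'', rfl⟩ := List.exists_cons_of_ne_nil hq'ne
      have hac : head a = tail c := (List.isChain_cons_cons.mp hpchain).1
      have had : head a = tail d := (List.isChain_cons_cons.mp hqchain).1
      have hp' : IsElemPath tail head (head a) t (c :: p'') := by
        refine ⟨List.cons_ne_nil _ _, (List.isChain_cons_cons.mp hpchain).2, ?_, ?_, ?_⟩
        · intro x hx
          simp only [List.head?_cons, Option.mem_def, Option.some.injEq] at hx
          subst hx; exact hac.symm
        · intro x hx
          exact hplast x (by rw [List.getLast?_cons_cons]; exact hx)
        · have := hpnodup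
          rw [List.map_cons, List.cons_append] at this
          exact (List.nodup_cons.mp this).2
      have hq' : IsElemPath tail head (head a) t (d :: q'') := by
        refine ⟨List.cons_ne_nil _ _, (List.isChain_cons_cons.mp hqchain).2, ?_, ?_, ?_⟩
        · intro x hx
          simp only [List.head?_cons, Option.mem_def, Option.some.injEq] at hx
          subst hx; exact had.symm
        · intro x hx
          exact hqlast x (by rw [List.getLast?_cons_cons]; exact hx)
        · have := hqnodup
          rw [List.map_cons, List.cons_append] at this
          exact (List.nodup_cons.mp this).2
      rw [ih (d :: q'') (head a) hq' hp' hpq']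

/-- Union-freeness of the elementary s-t path structure: the union of the arc
sets of two distinct elementary s-t paths is never the arc set of an elementary
s-t path. -/
theorem stmt_2 {V A : Type} [DecidableEq V] [DecidableEq A]
    (tail head : A → V) (s t : V) (hst : s ≠ t)
    (p₁ p₂ : List A)
    (h₁ : IsElemPath tail head s t p₁) (h₂ : IsElemPath tail head s t p₂)
    (hne : p₁.toFinset ≠ p₂.toFinset) :
    ¬ ∃ q : List A, IsElemPath tail head s t q ∧
      q.toFinset = p₁.toFinset ∪ p₂.toFinset := by
  rintro ⟨q, hq, hunion⟩
  have e₁ : p₁ = q := by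
    refine elem_path_sub_eq tail head t p₁ q s hq h₁ (fun a ha => ?_)
    have : a ∈ q.toFinset := by
      rw [hunion]; exact Finset.mem_union_left _ (List.mem_toFinset.mpr ha)
    exact List.mem_toFinset.mp this
  have e₂ : p₂ = q := by
    refine elem_path_sub_eq tail head t p₂ q s hq h₂ (fun a ha => ?_)
    have : a ∈ q.toFinset := by
      rw [hunion]; exact Finset.mem_union_right _ (List.mem_toFinset.mpr ha)
    exact List.mem_toFinset.mp this
  exact hne (by rw [e₁, e₂])
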